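/- Let P = conv{v^1,...,v^ℓ} + cone{r^1,...,r^m} ⊆ ℝ^{p+q} with all r^j integral, and for K ⊆ {1,...,m} with {r^j : j ∈ K} linearly independent define B^K = {x ∈ ℤ^p × ℝ^q : x = v + Σ_{j∈K} μ_j r^j, v ∈ conv{v^i}, μ_j ∈ [0,1]} and intcone(R_K) = {Σ_{j∈K} λ_j r^j : λ_j ∈ ℤ_{≥0}}. Then P ∩ (ℤ^p × ℝ^q) = ∪_K (B^K + intcone(R_K)), where the union is over all K such that {r^j : j ∈ K} is linearly independent. -/

import Mathlib

open Finset Pointwise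

lemma int_sum {m n : ℕ} (r : Fin m → (Fin n → ℝ))
    (hrint : ∀ j i, ∃ z : ℤ, r j i = (z : ℝ)) (lam : Fin m → ℕ)
    (K : Finset (Fin m)) (i : Fin n) :
    ∃ z : ℤ, (∑ j ∈ K, (lam j : ℝ) • r j) i = (z : ℝ) := by
  choose Z hZ using hrint
  refine ⟨∑ j ∈ K, (lam j : ℤ) * Z j i, ?_⟩
  push_cast
  simp only [Finset.sum_apply, Pi.smul_apply, smul_eq_mul]
  exact Finset.sum_congr rfl fun j _ => by rw [hZ j i]

lemma conic_cara {n m : ℕ} (r : Fin m → (Fin n → ℝ)) :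
    ∀ (N : ℕ) (ν : Fin m → ℝ), ((Finset.univ.filter fun j => ν j ≠ 0)).card ≤ N →
      (∀ j, 0 ≤ ν j) →
      ∃ K : Finset (Fin m), LinearIndependent ℝ (fun j : K => r (j : Fin m)) ∧
        ∃ ν' : Fin m → ℝ, (∀ j, 0 ≤ ν' j) ∧ (∀ j, j ∉ K → ν' j = 0) ∧
          ∑ j, ν' j • r j = ∑ j, ν j • r j := by
  intro N
  induction N with
  | zero =>
    intro ν hcard hpos
    refine ⟨∅, linearIndependent_empty_type, ν, hpos, ?_, rfl⟩
    intro j _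
    by_contra h
    have hj : j ∈ Finset.univ.filter fun j => ν j ≠ 0 := by simp [h]
    have := Finset.card_eq_zero.mp (Nat.le_zero.mp hcard)
    simp [this] at hj
  | succ N ih =>
    intro ν hcard hpos
    set S := Finset.univ.filter fun j => ν j ≠ 0 with hS
    by_cases hli : LinearIndependent ℝ (fun j : S => r (j : Fin m))
    · exact ⟨S, hli, ν, hpos, fun j hj => by simpa [hS] using hj, rfl⟩
    · obtain ⟨g, hgsum, j0, hgj0⟩ := Fintype.not_linearIndependent_iff.mp hli
      -- extend g to Fin m, with appropriate sign
      set c0 : Fin m → ℝ := fun j => if h : j ∈ S then g ⟨j, h⟩ else 0 with hc0def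
      have key : ∀ c : Fin m → ℝ, (∀ j, j ∉ S → c j = 0) → (∑ j, c j • r j = 0) →
          0 < c j0 →
          ∃ K : Finset (Fin m), LinearIndependent ℝ (fun j : K => r (j : Fin m)) ∧
            ∃ ν' : Fin m → ℝ, (∀ j, 0 ≤ ν' j) ∧ (∀ j, j ∉ K → ν' j = 0) ∧
              ∑ j, ν' j • r j = ∑ j, ν j • r j := by
        intro c hcsupp hcsum hcj0
        set T := S.filter fun j => 0 < c j with hT
        have hj0T : (j0 : Fin m) ∈ T := by
          simp only [hT, Finset.mem_filter]
          exact ⟨j0.2, hcj0⟩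
        have hTne : T.Nonempty := ⟨j0, hj0T⟩
        set t := T.inf' hTne fun j => ν j / c j with ht
        have ht0 : 0 ≤ t := by
          apply Finset.le_inf'
          intro j hj
          have hcj : 0 < c j := (Finset.mem_filter.mp hj).2
          exact div_nonneg (hpos j) hcj.le
        obtain ⟨jm, hjmT, hjm⟩ := Finset.exists_mem_eq_inf' hTne fun j => ν j / c j
        have hcjm : 0 < c jm := (Finset.mem_filter.mp hjmT).2
        set ν'' : Fin m → ℝ := fun j => ν j - t * c j with hν''
        have hν''pos : ∀ j, 0 ≤ ν'' j := by
          intro j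
          by_cases hcj : 0 < c j
          · have hjS : j ∈ S := by
              by_contra hjS
              rw [hcsupp j hjS] at hcj
              exact lt_irrefl 0 hcj
            have hjT : j ∈ T := Finset.mem_filter.mpr ⟨hjS, hcj⟩
            have := Finset.inf'_le (fun j => ν j / c j) hjT
            rw [← ht] at this
            have : t * c j ≤ ν j := by
              rw [← le_div_iff₀ hcj]; exact this
            simpa [hν''] using this
          · push_neg at hcj
            have : t * c j ≤ 0 := mul_nonpos_of_nonneg_of_nonpos ht0 hcj
            have := sub_nonneg.mpr (this.trans (hpos j))
            simp only [hν'']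
            nlinarith [hpos j]
        have hν''jm : ν'' jm = 0 := by
          show ν jm - t * c jm = 0
          rw [ht, hjm]
          field_simp
          ring
        have hsupp : (Finset.univ.filter fun j => ν'' j ≠ 0) ⊆ S.erase jm := by
          intro j hj
          simp only [Finset.mem_filter] at hj
          rw [Finset.mem_erase]
          constructor
          · rintro rfl; exact hj.2 hν''jm
          · by_contra hjS
            have h1 : ν j = 0 := by simpa [hS] using hjS
            have h2 : c j = 0 := hcsupp j hjS
            exact hj.2 (by simp [hν'', h1, h2])
        have hcard' : (Finset.univ.filter fun j => ν'' j ≠ 0).card ≤ N := by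
          have h1 := Finset.card_le_card hsupp
          have h2 : (S.erase jm).card = S.card - 1 :=
            Finset.card_erase_of_mem (Finset.mem_filter.mp hjmT).1
          omega
        have hsum'' : ∑ j, ν'' j • r j = ∑ j, ν j • r j := by
          simp only [hν'', sub_smul, Finset.sum_sub_distrib]
          have : ∑ j, (t * c j) • r j = t • ∑ j, c j • r j := by
            rw [Finset.smul_sum]
            exact Finset.sum_congr rfl fun j _ => by rw [smul_smul]
          rw [this, hcsum, smul_zero, sub_zero]
        obtain ⟨K, hK, ν', h1, h2, h3⟩ := ih ν'' hcard' hν''pos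
        exact ⟨K, hK, ν', h1, h2, h3.trans hsum''⟩
      have hc0supp : ∀ j, j ∉ S → c0 j = 0 := fun j hj => dif_neg hj
      have hc0sum : ∑ j, c0 j • r j = 0 := by
        rw [← Finset.sum_subset S.subset_univ (fun j _ hj => by rw [hc0supp j hj, zero_smul])]
        rw [← Finset.sum_attach S fun j => c0 j • r j]
        rw [← hgsum, ← Finset.univ_eq_attach]
        exact Finset.sum_congr rfl fun j _ => by simp [hc0def, j.2]
      have hc0j0 : c0 j0 = g j0 := by simp [hc0def, j0.2]
      rcases lt_trichotomy (c0 j0) 0 with h | h | h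
      · refine key (-c0) (fun j hj => by simp [hc0supp j hj]) ?_ (by simpa using h)
        simp only [Pi.neg_apply, neg_smul, Finset.sum_neg_distrib, hc0sum, neg_zero]
      · exact absurd (hc0j0 ▸ h) hgj0
      · exact key c0 hc0supp hc0sum h

/-- Decomposition of the mixed-integer points of a polyhedron. -/
theorem stmt11 (p q ℓ m : ℕ) (v : Fin ℓ → (Fin (p + q) → ℝ))
    (r : Fin m → (Fin (p + q) → ℝ))
    (hrint : ∀ j i, ∃ z : ℤ, r j i = (z : ℝ))
    (P : Set (Fin (p + q) → ℝ))
    (hP : P = {x | ∃ w ∈ convexHull ℝ (Set.range v), ∃ ν : Fin m → ℝ,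
      (∀ j, 0 ≤ ν j) ∧ x = w + ∑ j, ν j • r j}) :
    {x ∈ P | ∀ i : Fin (p + q), (i : ℕ) < p → ∃ z : ℤ, x i = (z : ℝ)} =
      ⋃ K ∈ {K : Finset (Fin m) | LinearIndependent ℝ (fun j : K => r (j : Fin m))},
        ({x : Fin (p + q) → ℝ |
            (∀ i : Fin (p + q), (i : ℕ) < p → ∃ z : ℤ, x i = (z : ℝ)) ∧
            ∃ w ∈ convexHull ℝ (Set.range v), ∃ μ : Fin m → ℝ,
              (∀ j ∈ K, μ j ∈ Set.Icc (0 : ℝ) 1) ∧ x = w + ∑ j ∈ K, μ j • r j}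
          + {y : Fin (p + q) → ℝ | ∃ lam : Fin m → ℕ, y = ∑ j ∈ K, (lam j : ℝ) • r j}) := by
  subst hP
  ext x
  simp only [Set.mem_setOf_eq, Set.mem_iUnion, Set.mem_add, exists_prop]
  constructor
  · rintro ⟨⟨w, hw, ν, hν0, hx⟩, hint⟩
    obtain ⟨K, hK, ν', hν'0, hν'supp, hsum⟩ := conic_cara r _ ν le_rfl hν0
    refine ⟨K, hK, ?_⟩
    set lam : Fin m → ℕ := fun j => (⌊ν' j⌋).toNat with hlamdef
    set μ : Fin m → ℝ := fun j => Int.fract (ν' j) with hμdef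
    have hlam : ∀ j, (lam j : ℝ) = (⌊ν' j⌋ : ℝ) := fun j => by
      have h := Int.toNat_of_nonneg (Int.floor_nonneg.mpr (hν'0 j))
      exact_mod_cast congrArg (fun z : ℤ => (z : ℝ)) h
    set y := ∑ j ∈ K, (lam j : ℝ) • r j with hydef
    have hyint : ∀ i, ∃ z : ℤ, y i = (z : ℝ) := int_sum r hrint lam K
    have hsumK : ∑ j ∈ K, ν' j • r j = ∑ j, ν' j • r j :=
      Finset.sum_subset K.subset_univ fun j _ hj => by rw [hν'supp j hj, zero_smul]
    have hxeq : x = w + ∑ j ∈ K, ν' j • r j := by rw [hx, ← hsum, hsumK]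
    have hdecomp : ∑ j ∈ K, ν' j • r j = (∑ j ∈ K, μ j • r j) + y := by
      rw [hydef, ← Finset.sum_add_distrib]
      refine Finset.sum_congr rfl fun j _ => ?_
      rw [← add_smul, hlam j]
      show ν' j • r j = (Int.fract (ν' j) + (⌊ν' j⌋ : ℝ)) • r j
      rw [Int.fract_add_floor]
    have hxby : x = (w + ∑ j ∈ K, μ j • r j) + y := by rw [hxeq, hdecomp, add_assoc]
    refine ⟨w + ∑ j ∈ K, μ j • r j, ⟨?_, w, hw, μ, ?_, rfl⟩, y, ⟨lam, rfl⟩, hxby.symm⟩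
    · intro i hi
      obtain ⟨z1, hz1⟩ := hint i hi
      obtain ⟨z2, hz2⟩ := hyint i
      refine ⟨z1 - z2, ?_⟩
      have := congrFun hxby i
      simp only [Pi.add_apply] at this
      push_cast
      rw [← hz1, ← hz2, this]
      simp only [Pi.add_apply]
      ring
    · intro j _
      exact ⟨Int.fract_nonneg _, (Int.fract_lt_one _).le⟩
  · rintro ⟨K, hK, b, ⟨hbint, w, hw, μ, hμ, hbeq⟩, y, ⟨lam, hyeq⟩, hxby⟩
    have hyint : ∀ i, ∃ z : ℤ, y i = (z : ℝ) := fun i => hyeq ▸ int_sum r hrint lam K i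
    constructor
    · refine ⟨w, hw, fun j => if j ∈ K then μ j + lam j else 0, ?_, ?_⟩
      · intro j
        by_cases h : j ∈ K
        · simp only [if_pos h]
          exact add_nonneg (hμ j h).1 (Nat.cast_nonneg _)
        · simp [h]
      · have h1 : ∑ j, (if j ∈ K then μ j + (lam j : ℝ) else 0) • r j
            = ∑ j ∈ K, (μ j + (lam j : ℝ)) • r j := by
          have e : ∀ j, (if j ∈ K then μ j + (lam j : ℝ) else 0) • r j
              = if j ∈ K then (μ j + (lam j : ℝ)) • r j else 0 := fun j => by
            split <;> simp
          simp only [e]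
          rw [Finset.sum_ite_mem, Finset.univ_inter]
        have h2 : x = w + (∑ j ∈ K, μ j • r j + ∑ j ∈ K, (lam j : ℝ) • r j) := by
          rw [← hxby, hbeq, hyeq, add_assoc]
        rw [h2, h1, ← Finset.sum_add_distrib]
        congr 1
        exact Finset.sum_congr rfl fun j _ => (add_smul _ _ _).symm
    · intro i hi
      obtain ⟨z1, hz1⟩ := hbint i hi
      obtain ⟨z2, hz2⟩ := hyint i
      refine ⟨z1 + z2, ?_⟩
      have := congrFun hxby i
      simp only [Pi.add_apply] at this
      push_cast
      rw [← hz1, ← hz2, this]
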